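/- arXiv:math/0604466 — 4 statements merged into one kernel-verified Lean document; each statement's English description precedes it below -/
import Mathlib

section
/- Let K be a linearly ordered field and fp : K_fin → ℝ the finite-part map. Then fp is multiplicative: fp(x * y) = fp(x) * fp(y) for all finite x, y in K. -/
noncomputable def fp {K : Type*} [Field K] [LinearOrder K] [IsStrictOrderedRing K] (x : K) : ℝ :=
  sSup {r : ℝ | ∃ q : ℚ, (q : K) ≤ x ∧ (q : ℝ) = r}

section Aux

variable {K : Type*} [Field K] [LinearOrder K] [IsStrictOrderedRing K]

def Ffin (x : K) : Prop := ∃ n : ℕ, -(n : K) ≤ x ∧ x ≤ (n : K)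

lemma ffin_of_abs {x : K} {n : ℕ} (h : |x| ≤ (n : K)) : Ffin x := by
  rcases abs_le.mp h with ⟨h1, h2⟩
  exact ⟨n, h1, h2⟩

lemma Ffin.bound {x : K} (h : Ffin x) : ∃ n : ℕ, |x| ≤ (n : K) := by
  obtain ⟨n, h1, h2⟩ := h
  exact ⟨n, abs_le.mpr ⟨h1, h2⟩⟩

lemma Ffin.add {x y : K} (hx : Ffin x) (hy : Ffin y) : Ffin (x + y) := by
  obtain ⟨n, hn⟩ := hx.bound
  obtain ⟨m, hm⟩ := hy.bound
  refine ffin_of_abs (n := n + m) ?_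
  calc |x + y| ≤ |x| + |y| := abs_add_le x y
    _ ≤ (n : K) + m := add_le_add hn hm
    _ = ((n + m : ℕ) : K) := by push_cast; ring

lemma Ffin.mul {x y : K} (hx : Ffin x) (hy : Ffin y) : Ffin (x * y) := by
  obtain ⟨n, hn⟩ := hx.bound
  obtain ⟨m, hm⟩ := hy.bound
  refine ffin_of_abs (n := n * m) ?_
  calc |x * y| = |x| * |y| := abs_mul x y
    _ ≤ (n : K) * m := mul_le_mul hn hm (abs_nonneg _) (by positivity)
    _ = ((n * m : ℕ) : K) := by push_cast; ring

lemma Ffin.rat (q : ℚ) : Ffin ((q : K)) := by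
  refine ffin_of_abs (n := ⌈|q|⌉₊) ?_
  rw [← Rat.cast_abs]
  have h : |q| ≤ (⌈|q|⌉₊ : ℚ) := Nat.le_ceil _
  calc ((|q| : ℚ) : K) ≤ ((⌈|q|⌉₊ : ℚ) : K) := by exact_mod_cast h
    _ = (⌈|q|⌉₊ : K) := by push_cast; ring

lemma Ffin.nat (k : ℕ) : Ffin ((k : K)) := by
  have := Ffin.rat (K := K) (k : ℚ)
  simpa using this

lemma fp_nonempty {x : K} (hx : Ffin x) :
    Set.Nonempty {r : ℝ | ∃ q : ℚ, (q : K) ≤ x ∧ (q : ℝ) = r} := by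
  obtain ⟨n, h1, _⟩ := hx
  refine ⟨_, -(n : ℚ), by push_cast; linarith, rfl⟩

lemma fp_bdd {x : K} (hx : Ffin x) :
    BddAbove {r : ℝ | ∃ q : ℚ, (q : K) ≤ x ∧ (q : ℝ) = r} := by
  obtain ⟨n, _, h2⟩ := hx
  refine ⟨(n : ℝ), ?_⟩
  rintro r ⟨q, hq, rfl⟩
  have h : (q : K) ≤ ((n : ℚ) : K) := by push_cast; linarith
  have h' : q ≤ (n : ℚ) := by exact_mod_cast h
  exact_mod_cast h'

lemma le_fp {x : K} (hx : Ffin x) {q : ℚ} (h : (q : K) ≤ x) : (q : ℝ) ≤ fp x :=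
  le_csSup (fp_bdd hx) ⟨q, h, rfl⟩

lemma lt_of_lt_fp {x : K} (hx : Ffin x) {q : ℚ} (h : (q : ℝ) < fp x) : (q : K) < x := by
  obtain ⟨r, ⟨q', hq', rfl⟩, hlt⟩ := exists_lt_of_lt_csSup (fp_nonempty hx) h
  have hq : q < q' := by exact_mod_cast hlt
  calc (q : K) < (q' : K) := by exact_mod_cast hq
    _ ≤ x := hq'

lemma lt_of_fp_lt {x : K} (hx : Ffin x) {q : ℚ} (h : fp x < (q : ℝ)) : x < (q : K) := by
  by_contra hc
  exact absurd (le_fp hx (le_of_not_gt hc)) (not_le.mpr h)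

lemma fp_eq {x : K} (hx : Ffin x) (P : ℝ)
    (hlow : ∀ q : ℚ, (q : ℝ) < P → (q : K) < x)
    (hhigh : ∀ q : ℚ, P < (q : ℝ) → x < (q : K)) : fp x = P := by
  apply le_antisymm
  · apply csSup_le (fp_nonempty hx)
    rintro r ⟨q, hq, rfl⟩
    by_contra hc
    exact absurd hq (not_le.mpr (hhigh q (lt_of_not_ge hc)))
  · refine le_of_forall_lt fun c hc => ?_
    obtain ⟨q, hq1, hq2⟩ := exists_rat_btwn hc
    exact hq1.trans_le (le_fp hx (hlow q hq2).le)

lemma fp_rat (q : ℚ) : fp ((q : K)) = (q : ℝ) := by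
  apply fp_eq (Ffin.rat q)
  · intro q' hq'
    have : q' < q := by exact_mod_cast hq'
    exact_mod_cast this
  · intro q' hq'
    have : q < q' := by exact_mod_cast hq'
    exact_mod_cast this

lemma fp_add {x y : K} (hx : Ffin x) (hy : Ffin y) : fp (x + y) = fp x + fp y := by
  apply fp_eq (hx.add hy)
  · intro q hq
    have h1 : (q : ℝ) - fp y < fp x := by linarith
    obtain ⟨a, ha1, ha2⟩ := exists_rat_btwn h1
    have h2 : (q : ℝ) - a < fp y := by push_cast at ha1 ⊢; linarith
    obtain ⟨b, hb1, hb2⟩ := exists_rat_btwn h2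
    have hax : (a : K) < x := lt_of_lt_fp hx ha2
    have hby : (b : K) < y := lt_of_lt_fp hy hb2
    have hq' : q < a + b := by
      have : (q : ℝ) < a + b := by push_cast at hb1 ⊢; linarith
      exact_mod_cast this
    calc (q : K) < ((a + b : ℚ) : K) := by exact_mod_cast hq'
      _ = (a : K) + b := by push_cast; ring
      _ < x + y := add_lt_add hax hby
  · intro q hq
    have h1 : fp x < (q : ℝ) - fp y := by linarith
    obtain ⟨a, ha1, ha2⟩ := exists_rat_btwn h1
    have h2 : fp y < (q : ℝ) - a := by push_cast at ha2 ⊢; linarith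
    obtain ⟨b, hb1, hb2⟩ := exists_rat_btwn h2
    have hax : x < (a : K) := lt_of_fp_lt hx ha1
    have hby : y < (b : K) := lt_of_fp_lt hy hb1
    have hq' : a + b < q := by
      have : ((a : ℝ)) + b < q := by push_cast at hb2 ⊢; linarith
      exact_mod_cast this
    calc x + y < (a : K) + b := add_lt_add hax hby
      _ = ((a + b : ℚ) : K) := by push_cast; ring
      _ < (q : K) := by exact_mod_cast hq'

lemma fp_nat (k : ℕ) : fp ((k : K)) = (k : ℝ) := by
  have := fp_rat (K := K) (k : ℚ)
  simpa using this

lemma fp_nat_mul {y : K} (hy : Ffin y) (k : ℕ) : fp ((k : K) * y) = (k : ℝ) * fp y := by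
  induction k with
  | zero => simpa using fp_nat (K := K) 0
  | succ k ih =>
    have h1 : ((k + 1 : ℕ) : K) * y = (k : K) * y + y := by push_cast; ring
    rw [h1, fp_add ((Ffin.nat k).mul hy) hy, ih]
    push_cast; ring

lemma one_le_fp {x : K} (hx : Ffin x) (h1 : (1 : K) ≤ x) : (1 : ℝ) ≤ fp x := by
  have := le_fp hx (q := 1) (by exact_mod_cast h1)
  exact_mod_cast this

lemma fp_pos_mul {x y : K} (hx : Ffin x) (hy : Ffin y)
    (hx1 : (1 : K) ≤ x) (hy1 : (1 : K) ≤ y) : fp (x * y) = fp x * fp y := by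
  have hfx1 : (1 : ℝ) ≤ fp x := one_le_fp hx hx1
  have hfy1 : (1 : ℝ) ≤ fp y := one_le_fp hy hy1
  have hfy0 : (0 : ℝ) < fp y := by linarith
  apply fp_eq (hx.mul hy)
  · intro q hq
    by_cases hq1 : (q : ℝ) < 1
    · have hqK : (q : K) < 1 := by exact_mod_cast hq1
      have hxy1 : (1 : K) ≤ x * y := by nlinarith
      linarith
    · push_neg at hq1
      have hq0 : (0 : ℝ) < q := by linarith
      have h1 : (q : ℝ) / fp y < fp x := (div_lt_iff₀ hfy0).mpr hq
      obtain ⟨a, ha1, ha2⟩ := exists_rat_btwn h1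
      have ha0 : (0 : ℝ) < a := lt_trans (by positivity) ha1
      have h2 : (q : ℝ) / a < fp y := by
        rw [div_lt_iff₀ ha0]
        have := (div_lt_iff₀ hfy0).mp ha1
        nlinarith
      obtain ⟨b, hb1, hb2⟩ := exists_rat_btwn h2
      have hb0 : (0 : ℝ) < b := lt_trans (by positivity) hb1
      have hax : (a : K) < x := lt_of_lt_fp hx ha2
      have hby : (b : K) < y := lt_of_lt_fp hy hb2
      have hqab : q < a * b := by
        have := (div_lt_iff₀ ha0).mp hb1
        have h : (q : ℝ) < a * b := by nlinarith
        exact_mod_cast h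
      have ha0' : (0 : ℚ) ≤ a := by exact_mod_cast ha0.le
      have hb0' : (0 : ℚ) ≤ b := by exact_mod_cast hb0.le
      calc (q : K) < ((a * b : ℚ) : K) := by exact_mod_cast hqab
        _ = (a : K) * b := by push_cast; ring
        _ < x * y := mul_lt_mul'' hax hby (by exact_mod_cast ha0') (by exact_mod_cast hb0')
  · intro q hq
    have hq0 : (0 : ℝ) < q := by nlinarith
    have h1 : fp x < (q : ℝ) / fp y := (lt_div_iff₀ hfy0).mpr hq
    obtain ⟨a, ha1, ha2⟩ := exists_rat_btwn h1
    have ha0 : (0 : ℝ) < a := by linarith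
    have h2 : fp y < (q : ℝ) / a := by
      rw [lt_div_iff₀ ha0]
      have := (lt_div_iff₀ hfy0).mp ha2
      nlinarith
    obtain ⟨b, hb1, hb2⟩ := exists_rat_btwn h2
    have hax : x < (a : K) := lt_of_fp_lt hx ha1
    have hby : y < (b : K) := lt_of_fp_lt hy hb1
    have habq : a * b < q := by
      have := (lt_div_iff₀ ha0).mp hb2
      have h : ((a : ℝ)) * b < q := by nlinarith
      exact_mod_cast h
    have hx0 : (0 : K) ≤ x := le_trans zero_le_one hx1
    have hy0 : (0 : K) ≤ y := le_trans zero_le_one hy1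
    calc x * y < (a : K) * b := mul_lt_mul'' hax hby hx0 hy0
      _ = ((a * b : ℚ) : K) := by push_cast; ring
      _ < (q : K) := by exact_mod_cast habq

end Aux

theorem fp_multiplicative (K : Type*) [Field K] [LinearOrder K] [IsStrictOrderedRing K] (x y : K)
    (hx : ∃ n : ℕ, -(n : K) ≤ x ∧ x ≤ (n : K))
    (hy : ∃ n : ℕ, -(n : K) ≤ y ∧ y ≤ (n : K)) :
    fp (x * y) = fp x * fp y := by
  obtain ⟨n, hn1, hn2⟩ := hx
  obtain ⟨m, hm1, hm2⟩ := hy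
  have hfx : Ffin x := ⟨n, hn1, hn2⟩
  have hfy : Ffin y := ⟨m, hm1, hm2⟩
  set N : ℕ := n + 1 with hN
  set M : ℕ := m + 1 with hM
  have hA1 : (1 : K) ≤ x + (N : K) := by push_cast [hN]; linarith
  have hB1 : (1 : K) ≤ y + (M : K) := by push_cast [hM]; linarith
  have hfN : Ffin ((N : K)) := Ffin.nat N
  have hfM : Ffin ((M : K)) := Ffin.nat M
  have hfA : Ffin (x + (N : K)) := hfx.add hfN
  have hfB : Ffin (y + (M : K)) := hfy.add hfM
  have key : fp ((x + (N : K)) * (y + (M : K))) = fp (x + (N : K)) * fp (y + (M : K)) :=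
    fp_pos_mul hfA hfB hA1 hB1
  have expand : (x + (N : K)) * (y + (M : K))
      = (x * y + (N : K) * y) + ((M : K) * x + ((N * M : ℕ) : K)) := by push_cast; ring
  rw [expand] at key
  rw [fp_add ((hfx.mul hfy).add (hfN.mul hfy)) ((hfM.mul hfx).add (Ffin.nat (N * M))),
    fp_add (hfx.mul hfy) (hfN.mul hfy), fp_add (hfM.mul hfx) (Ffin.nat (N * M)),
    fp_nat_mul hfy N, fp_nat_mul hfx M, fp_nat (N * M),
    fp_add hfx hfN, fp_add hfy hfM, fp_nat N, fp_nat M] at key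
  push_cast at key
  nlinarith [key]
end

section
/- Let K be a countable non-archimedean linearly ordered field. Then there exists a strictly decreasing sequence (c_k) of positive elements of K that tends to zero in the order sense: for every positive ε ∈ K there exists N such that c_k < ε for all k ≥ N. -/
private def nullSeq {K : Type*} [Field K] [LinearOrder K] [IsStrictOrderedRing K] (x : ℕ → K) : ℕ → K
  | 0 => 1
  | (k + 1) => (if 0 < x k then min (nullSeq x k) (x k) else nullSeq x k) / 2

private lemma nullSeq_pos {K : Type*} [Field K] [LinearOrder K] [IsStrictOrderedRing K] (x : ℕ → K) :
    ∀ k, 0 < nullSeq x k := by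
  intro k
  induction k with
  | zero => exact one_pos
  | succ k ih =>
    simp only [nullSeq]
    split
    · exact div_pos (lt_min ih (by assumption)) two_pos
    · exact div_pos ih two_pos

private lemma nullSeq_succ_lt {K : Type*} [Field K] [LinearOrder K] [IsStrictOrderedRing K] (x : ℕ → K) (k : ℕ) :
    nullSeq x (k + 1) < nullSeq x k := by
  have h := nullSeq_pos x k
  simp only [nullSeq]
  split
  · calc min (nullSeq x k) (x k) / 2 ≤ nullSeq x k / 2 := by
          apply div_le_div_of_nonneg_right (min_le_left _ _) two_pos.le
      _ < nullSeq x k := half_lt_self h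
  · exact half_lt_self h

theorem exists_null_sequence (K : Type*) [Field K] [LinearOrder K] [IsStrictOrderedRing K] [Countable K]
    (hna : ∃ e : K, ∀ n : ℕ, (n : K) < e) :
    ∃ c : ℕ → K, StrictAnti c ∧ (∀ k, 0 < c k) ∧
      ∀ ε : K, 0 < ε → ∃ N : ℕ, ∀ k ≥ N, c k < ε := by
  obtain ⟨x, hx⟩ := exists_surjective_nat K
  refine ⟨nullSeq x, strictAnti_nat_of_succ_lt (nullSeq_succ_lt x), nullSeq_pos x, ?_⟩
  intro ε hε
  obtain ⟨n, rfl⟩ := hx ε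
  refine ⟨n + 1, fun k hk => ?_⟩
  have h1 : nullSeq x k ≤ nullSeq x (n + 1) :=
    (strictAnti_nat_of_succ_lt (nullSeq_succ_lt x)).antitone hk
  have h2 : nullSeq x (n + 1) < x n := by
    simp only [nullSeq, if_pos hε]
    calc min (nullSeq x n) (x n) / 2 ≤ x n / 2 := by
          apply div_le_div_of_nonneg_right (min_le_right _ _) two_pos.le
      _ < x n := half_lt_self hε
  exact lt_of_le_of_lt h1 h2
end

section
/- Let K be a linearly ordered field satisfying the intermediate value property for polynomials: whenever f ∈ K[X] and a < b with f(a) * f(b) < 0, there exists x ∈ [a,b] with f(x) = 0. Then every positive element of K has a square root in K, and every polynomial of odd degree over K has a root in K; hence K is real closed. -/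
open Polynomial

theorem aux_pos_of_ge {K : Type*} [Field K] [LinearOrder K] [IsStrictOrderedRing K] (f : Polynomial K)
    (hn : 0 < f.natDegree) (ha : 0 < f.leadingCoeff) :
    ∃ B : K, 1 ≤ B ∧ ∀ x : K, B ≤ x → 0 < f.eval x := by
  set n := f.natDegree with hn'
  set S : K := ∑ i ∈ Finset.range n, |f.coeff i| with hS
  have hS0 : 0 ≤ S := Finset.sum_nonneg fun i _ => abs_nonneg _
  refine ⟨max 1 ((S + 1) / f.leadingCoeff), le_max_left _ _, fun x hx => ?_⟩
  have hx1 : (1:K) ≤ x := le_trans (le_max_left _ _) hx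
  have hx0 : (0:K) < x := lt_of_lt_of_le one_pos hx1
  have hxp : 0 < x ^ (n-1) := pow_pos hx0 _
  have key : ∀ i ∈ Finset.range n, -(|f.coeff i| * x ^ (n-1)) ≤ f.coeff i * x ^ i := by
    intro i hi
    have h1 : x ^ i ≤ x ^ (n-1) :=
      pow_le_pow_right₀ hx1 (Nat.le_sub_one_of_lt (Finset.mem_range.mp hi))
    calc -(|f.coeff i| * x ^ (n-1)) ≤ -(|f.coeff i| * x ^ i) := by
          apply neg_le_neg
          exact mul_le_mul_of_nonneg_left h1 (abs_nonneg _)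
      _ ≤ f.coeff i * x ^ i := by
          rw [neg_mul_eq_neg_mul]
          exact mul_le_mul_of_nonneg_right (neg_abs_le _) (le_of_lt (pow_pos hx0 i))
  have hsum : -(S * x ^ (n-1)) ≤ ∑ i ∈ Finset.range n, f.coeff i * x ^ i := by
    have := Finset.sum_le_sum key
    calc -(S * x ^ (n-1)) = ∑ i ∈ Finset.range n, -(|f.coeff i| * x ^ (n-1)) := by
          rw [Finset.sum_neg_distrib, ← Finset.sum_mul, hS]
      _ ≤ _ := this
  have hlead : (S + 1) * x ^ (n-1) ≤ f.leadingCoeff * x ^ n := by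
    have hax : S + 1 ≤ f.leadingCoeff * x := by
      have hx2 : (S + 1) / f.leadingCoeff ≤ x := le_trans (le_max_right _ _) hx
      rw [div_le_iff₀ ha] at hx2
      linarith [hx2]
    calc (S + 1) * x ^ (n-1) ≤ (f.leadingCoeff * x) * x ^ (n-1) :=
          mul_le_mul_of_nonneg_right hax (le_of_lt hxp)
      _ = f.leadingCoeff * x ^ n := by
          rw [mul_assoc, ← pow_succ']
          congr 2
          omega
  have heval : f.eval x = (∑ i ∈ Finset.range n, f.coeff i * x ^ i)
      + f.leadingCoeff * x ^ n := by
    rw [Polynomial.eval_eq_sum_range, Finset.sum_range_succ]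
    rfl
  have : 0 < x ^ (n-1) := hxp
  rw [heval]
  nlinarith [hsum, hlead, hxp]

theorem aux_root {K : Type*} [Field K] [LinearOrder K] [IsStrictOrderedRing K]
    (hivp : ∀ f : Polynomial K, ∀ a b : K, a < b → f.eval a * f.eval b < 0 →
      ∃ x : K, a ≤ x ∧ x ≤ b ∧ f.eval x = 0)
    (f : Polynomial K) (hodd : Odd f.natDegree) (ha : 0 < f.leadingCoeff) :
    ∃ x : K, f.eval x = 0 := by
  have hn : 0 < f.natDegree := hodd.pos
  obtain ⟨B, hB1, hB⟩ := aux_pos_of_ge f hn ha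
  set g : Polynomial K := -(f.comp (-Polynomial.X)) with hg
  have hgn : g.natDegree = f.natDegree := by
    rw [hg, natDegree_neg, natDegree_comp]
    simp
  have hga : 0 < g.leadingCoeff := by
    rw [hg, leadingCoeff_neg, leadingCoeff_comp (by simp)]
    simp only [leadingCoeff_neg, leadingCoeff_X]
    rw [hodd.neg_one_pow]
    simpa using ha
  obtain ⟨B', hB'1, hB'⟩ := aux_pos_of_ge g (hgn ▸ hn) hga
  set M := max B B' with hM
  have hM1 : (1:K) ≤ M := le_trans hB1 (le_max_left _ _)
  have hlt : -M < M := by linarith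
  have h1 : 0 < f.eval M := hB M (le_max_left _ _)
  have h2 : f.eval (-M) < 0 := by
    have := hB' M (le_max_right _ _)
    rw [hg] at this
    simp only [eval_neg, eval_comp, eval_neg, eval_X] at this
    linarith
  obtain ⟨x, _, _, hx⟩ := hivp f (-M) M hlt (mul_neg_of_neg_of_pos h2 h1)
  exact ⟨x, hx⟩

theorem real_closed_of_ivp (K : Type*) [Field K] [LinearOrder K] [IsStrictOrderedRing K]
    (hivp : ∀ f : Polynomial K, ∀ a b : K, a < b → f.eval a * f.eval b < 0 →
      ∃ x : K, a ≤ x ∧ x ≤ b ∧ f.eval x = 0) :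
    (∀ c : K, 0 < c → ∃ s : K, 0 < s ∧ s ^ 2 = c) ∧
    (∀ f : Polynomial K, Odd f.natDegree → ∃ x : K, f.eval x = 0) := by
  constructor
  · intro c hc
    have hprod : (Polynomial.X ^ 2 - Polynomial.C c : Polynomial K).eval 0 *
        (Polynomial.X ^ 2 - Polynomial.C c).eval (c + 1) < 0 := by
      simp only [eval_sub, eval_pow, eval_X, eval_C]
      have h1 : (0:K) ^ 2 - c < 0 := by nlinarith
      have h2 : (0:K) < (c + 1) ^ 2 - c := by nlinarith
      exact mul_neg_of_neg_of_pos h1 h2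
    obtain ⟨x, hx0, _, hx⟩ := hivp (Polynomial.X ^ 2 - Polynomial.C c) 0 (c + 1)
      (by linarith) hprod
    simp only [eval_sub, eval_pow, eval_X, eval_C, sub_eq_zero] at hx
    refine ⟨x, ?_, hx⟩
    rcases hx0.lt_or_eq with h | h
    · exact h
    · exfalso; nlinarith [h ▸ hx]
  · intro f hodd
    have hf0 : f.leadingCoeff ≠ 0 := by
      intro h
      rw [leadingCoeff_eq_zero] at h
      rw [h] at hodd
      simp at hodd
    rcases hf0.lt_or_gt with h | h
    · have hodd' : Odd (-f).natDegree := by rwa [natDegree_neg]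
      have ha' : 0 < (-f).leadingCoeff := by rw [leadingCoeff_neg]; linarith
      obtain ⟨x, hx⟩ := aux_root hivp (-f) hodd' ha'
      exact ⟨x, by simpa using hx⟩
    · exact aux_root hivp f hodd h
end

section
/- Let K be a real closed ordered field. Then the subfield of K consisting of elements algebraic over ℚ is itself a real closed field. -/
theorem algebraic_subfield_real_closed (K : Type*) [Field K] [LinearOrder K] [IsStrictOrderedRing K]
    (hsq : ∀ c : K, 0 < c → ∃ s : K, s ^ 2 = c)
    (hodd : ∀ f : Polynomial K, Odd f.natDegree → ∃ x : K, f.eval x = 0) :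
    ∃ A : Subfield K, (∀ x : K, x ∈ A ↔ IsAlgebraic ℚ x) ∧
      (∀ c : A, 0 < (c : K) → ∃ s : A, s ^ 2 = c) ∧
      (∀ f : Polynomial A, Odd f.natDegree → ∃ x : A, f.eval x = 0) := by
  refine ⟨(algebraicClosure ℚ K).toSubfield, fun x => mem_algebraicClosure_iff, ?_, ?_⟩
  · rintro ⟨c, hc⟩ hpos
    obtain ⟨s, hs⟩ := hsq c hpos
    have hsmem : s ∈ algebraicClosure ℚ K := by
      rw [mem_algebraicClosure_iff']
      exact IsIntegral.of_pow two_pos (hs ▸ mem_algebraicClosure_iff'.mp hc)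
    exact ⟨⟨s, hsmem⟩, Subtype.ext hs⟩
  · intro f hf
    have hinj : Function.Injective (algebraMap (algebraicClosure ℚ K) K) :=
      (algebraMap (algebraicClosure ℚ K) K).injective
    have hdeg : (f.map (algebraMap (algebraicClosure ℚ K) K)).natDegree = f.natDegree :=
      Polynomial.natDegree_map_eq_of_injective hinj f
    obtain ⟨x, hx⟩ := hodd (f.map (algebraMap (algebraicClosure ℚ K) K)) (hdeg ▸ hf)
    have hfne : f ≠ 0 := by
      rintro rfl
      simp at hf
    have hxalgA : IsAlgebraic (algebraicClosure ℚ K) x := ⟨f, hfne, by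
      rwa [Polynomial.aeval_def, ← Polynomial.eval_map]⟩
    have hxalg : IsIntegral ℚ x := by
      have : Algebra.IsIntegral ℚ (algebraicClosure ℚ K) :=
        (algebraicClosure.isAlgebraic ℚ K).isIntegral
      exact isIntegral_trans x hxalgA.isIntegral
    refine ⟨⟨x, mem_algebraicClosure_iff'.mpr hxalg⟩, ?_⟩
    apply hinj
    rw [← Polynomial.eval₂_at_apply]
    simpa [Polynomial.eval₂_eq_eval_map] using hx
end
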